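/- For density matrices ρ₀, ρ₁ and any quantum channel (completely positive trace-preserving map) E, one has Q_min(E(ρ₀), E(ρ₁)) ≥ Q_min(ρ₀, ρ₁), where Q_min(ρ₀,ρ₁) = 2·min{ Tr(Λρ₀) : 0 ≤ Λ ≤ I, Tr(Λ(ρ₀+ρ₁)) = 1 }. Equivalently, ξ_min(ρ₀,ρ₁) := −log Q_min(ρ₀,ρ₁) satisfies the data-processing inequality ξ_min(E(ρ₀),E(ρ₁)) ≤ ξ_min(ρ₀,ρ₁). -/

import Mathlib

open Matrix
open scoped ComplexOrder

/-- `Q_min(ρ₀,ρ₁) = 2·min{ Tr(Λρ₀) : 0 ≤ Λ ≤ I, Tr(Λ(ρ₀+ρ₁)) = 1 }`. -/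
noncomputable def Qmin {d : ℕ} (ρ₀ ρ₁ : Matrix (Fin d) (Fin d) ℂ) : ℝ :=
  sInf {x : ℝ | ∃ Λ : Matrix (Fin d) (Fin d) ℂ, Λ.PosSemidef ∧ (1 - Λ).PosSemidef ∧
    (Λ * (ρ₀ + ρ₁)).trace = 1 ∧ x = 2 * ((Λ * ρ₀).trace).re}

lemma psd_sum {n : ℕ} {ι : Type} [Fintype ι] (f : ι → Matrix (Fin n) (Fin n) ℂ)
    (h : ∀ i, (f i).PosSemidef) : (∑ i, f i).PosSemidef :=
  Finset.sum_induction f _ (fun _ _ ha hb => ha.add hb) .zero (fun i _ => h i)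

lemma psd_trace_nonneg {n : ℕ} {M : Matrix (Fin n) (Fin n) ℂ} (hM : M.PosSemidef) :
    0 ≤ M.trace := by
  rw [Matrix.trace]
  apply Finset.sum_nonneg
  intro i _
  have := hM.dotProduct_mulVec_nonneg (Pi.single i 1)
  simpa [dotProduct, Pi.single_apply, apply_ite] using this

open scoped MatrixOrder in
lemma psd_mul_trace_nonneg {n : ℕ} {A B : Matrix (Fin n) (Fin n) ℂ}
    (hA : A.PosSemidef) (hB : B.PosSemidef) : 0 ≤ ((A * B).trace).re := by
  have h1 : A * B = A * ((CFC.sqrt B) * (CFC.sqrt B)) := by rw [← pow_two, CFC.sq_sqrt B hB.nonneg]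
  have h2 : ((A * ((CFC.sqrt B) * (CFC.sqrt B))).trace) = (((CFC.sqrt B) * A * (CFC.sqrt B)).trace) := by
    rw [← mul_assoc, trace_mul_cycle]
  have h3 : ((CFC.sqrt B) * A * (CFC.sqrt B)).PosSemidef := by
    have := hA.conjTranspose_mul_mul_same (CFC.sqrt B)
    rwa [(CFC.sqrt_nonneg B).posSemidef.isHermitian.eq] at this
  have h4 := psd_trace_nonneg h3
  rw [h1, h2]
  exact (Complex.le_def.mp h4).1

lemma adj_trace {d m : ℕ} {ι : Type} [Fintype ι] (K : ι → Matrix (Fin m) (Fin d) ℂ)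
    (Λ : Matrix (Fin m) (Fin m) ℂ) (ρ : Matrix (Fin d) (Fin d) ℂ) :
    ((∑ i, (K i)ᴴ * Λ * K i) * ρ).trace = (Λ * ∑ i, K i * ρ * (K i)ᴴ).trace := by
  rw [Matrix.sum_mul, Matrix.mul_sum, trace_sum, trace_sum]
  refine Finset.sum_congr rfl fun i _ => ?_
  rw [show (K i)ᴴ * Λ * K i * ρ = (K i)ᴴ * (Λ * (K i * ρ)) by simp only [Matrix.mul_assoc],
    trace_mul_cycle' (K i)ᴴ Λ (K i * ρ), trace_mul_cycle' (K i * ρ) (K i)ᴴ Λ]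

/-- Data-processing inequality for `Q_min` (equivalently for `ξ_min = −log Q_min`):
for every quantum channel `E`, given in Kraus form `E(X) = ∑ i, K i * X * (K i)ᴴ`
with `∑ i, (K i)ᴴ * K i = 1`, one has `Q_min(E(ρ₀), E(ρ₁)) ≥ Q_min(ρ₀, ρ₁)`. -/
theorem Qmin_dpi {d m : ℕ} (ρ₀ ρ₁ : Matrix (Fin d) (Fin d) ℂ)
    (h₀ : ρ₀.PosSemidef) (h₀t : ρ₀.trace = 1)
    (h₁ : ρ₁.PosSemidef) (h₁t : ρ₁.trace = 1)
    {ι : Type} [Fintype ι] (K : ι → Matrix (Fin m) (Fin d) ℂ)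
    (hK : ∑ i, (K i)ᴴ * K i = 1) :
    Qmin ρ₀ ρ₁ ≤ Qmin (∑ i, K i * ρ₀ * (K i)ᴴ) (∑ i, K i * ρ₁ * (K i)ᴴ) := by
  set Eρ₀ := ∑ i, K i * ρ₀ * (K i)ᴴ with hEρ₀
  set Eρ₁ := ∑ i, K i * ρ₁ * (K i)ᴴ with hEρ₁
  have hEpsd₀ : Eρ₀.PosSemidef := psd_sum _ fun i => h₀.mul_mul_conjTranspose_same (K i)
  have hEtrace : ∀ (ρ : Matrix (Fin d) (Fin d) ℂ),
      (∑ i, K i * ρ * (K i)ᴴ).trace = ρ.trace := by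
    intro ρ
    have := adj_trace K 1 ρ
    simp only [one_mul, Matrix.mul_one] at this
    rw [← this, hK, one_mul]
  apply csInf_le_csInf
  · -- bounded below by 0
    refine ⟨0, fun x hx => ?_⟩
    obtain ⟨Λ, hΛ, _, _, hx⟩ := hx
    rw [hx]
    have := psd_mul_trace_nonneg hΛ h₀
    linarith
  · -- nonempty: Λ = (1/2) • 1
    refine ⟨1, (2⁻¹ : ℂ) • 1, ?_, ?_, ?_, ?_⟩
    · refine Matrix.PosSemidef.of_dotProduct_mulVec_nonneg ?_ ?_
      · unfold Matrix.IsHermitian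
        rw [conjTranspose_smul, conjTranspose_one]
        norm_num
      · intro x
        simp only [smul_mulVec, one_mulVec, dotProduct_smul]
        have h := dotProduct_star_self_nonneg x
        have : (0:ℂ) ≤ (2⁻¹ : ℂ) := by
          rw [Complex.le_def]; norm_num
        exact mul_nonneg this h
    · have : (1 : Matrix (Fin m) (Fin m) ℂ) - (2⁻¹ : ℂ) • 1 = (2⁻¹ : ℂ) • 1 := by
        rw [sub_eq_iff_eq_add, ← add_smul]
        norm_num
      rw [this]
      refine Matrix.PosSemidef.of_dotProduct_mulVec_nonneg ?_ ?_
      · unfold Matrix.IsHermitian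
        rw [conjTranspose_smul, conjTranspose_one]
        norm_num
      · intro x
        simp only [smul_mulVec, one_mulVec, dotProduct_smul]
        have h := dotProduct_star_self_nonneg x
        have : (0:ℂ) ≤ (2⁻¹ : ℂ) := by
          rw [Complex.le_def]; norm_num
        exact mul_nonneg this h
    · rw [smul_mul_assoc, one_mul, trace_smul, trace_add, hEtrace, hEtrace, h₀t, h₁t]
      norm_num
    · rw [smul_mul_assoc, one_mul, trace_smul]
      have : Eρ₀.trace = 1 := by rw [hEρ₀, hEtrace, h₀t]
      rw [this]
      norm_num
  · -- subset
    rintro x ⟨Λ, hΛ, h1Λ, htr, hx⟩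
    refine ⟨∑ i, (K i)ᴴ * Λ * K i, ?_, ?_, ?_, ?_⟩
    · exact psd_sum _ fun i => hΛ.conjTranspose_mul_mul_same (K i)
    · have : (1 : Matrix (Fin d) (Fin d) ℂ) - ∑ i, (K i)ᴴ * Λ * K i
          = ∑ i, (K i)ᴴ * (1 - Λ) * K i := by
        rw [← hK]
        rw [← Finset.sum_sub_distrib]
        refine Finset.sum_congr rfl fun i _ => ?_
        rw [Matrix.mul_sub, Matrix.sub_mul, Matrix.mul_one]
      rw [this]
      exact psd_sum _ fun i => h1Λ.conjTranspose_mul_mul_same (K i)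
    · rw [adj_trace]
      rw [show (∑ i, K i * (ρ₀ + ρ₁) * (K i)ᴴ) = Eρ₀ + Eρ₁ by
        rw [hEρ₀, hEρ₁, ← Finset.sum_add_distrib]
        refine Finset.sum_congr rfl fun i _ => ?_
        rw [Matrix.mul_add, Matrix.add_mul]]
      exact htr
    · rw [hx, adj_trace]
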